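/- Let 𝓕 be the collection of all isolated transitive neutral sets of a flow φ on a compact metric space. A subcollection 𝓕' of 𝓕 is finite if and only if the union ⋃_{Λ ∈ 𝓕'} Λ is closed. -/

import Mathlib

open Filter Topology Metric Set

variable {M : Type*} [MetricSpace M]

/-- `φ` is a continuous flow on `M`. -/
def IsFlow (φ : ℝ → M → M) : Prop :=
  Continuous (fun p : ℝ × M => φ p.1 p.2) ∧ (∀ x, φ 0 x = x) ∧
    (∀ s t : ℝ, ∀ x, φ (s + t) x = φ s (φ t x))

/-- The time-reversed flow. -/
def ReverseFlow (φ : ℝ → M → M) : ℝ → M → M := fun t x => φ (-t) x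

/-- A compact set `A` is Lyapunov stable for `φ`. -/
def LyapStable (φ : ℝ → M → M) (A : Set M) : Prop :=
  IsCompact A ∧ ∀ U : Set M, IsOpen U → A ⊆ U →
    ∃ V : Set M, IsOpen V ∧ A ⊆ V ∧ ∀ t : ℝ, 0 ≤ t → φ t '' V ⊆ U

/-- The ω-limit set of `x`: accumulation points of `φ t x` as `t → +∞`. -/
def OmegaSet (φ : ℝ → M → M) (x : M) : Set M :=
  {y | ∃ u : ℕ → ℝ, Tendsto u atTop atTop ∧ Tendsto (fun n => φ (u n) x) atTop (𝓝 y)}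

/-- The α-limit set of `x`: accumulation points of `φ t x` as `t → -∞`. -/
def AlphaSet (φ : ℝ → M → M) (x : M) : Set M :=
  {y | ∃ u : ℕ → ℝ, Tendsto u atTop atBot ∧ Tendsto (fun n => φ (u n) x) atTop (𝓝 y)}

/-- The stable set of `Λ`. -/
def StableSet (φ : ℝ → M → M) (Λ : Set M) : Set M :=
  {x | Tendsto (fun t => infDist (φ t x) Λ) atTop (𝓝 0)}

/-- The unstable set of `Λ`. -/
def UnstableSet (φ : ℝ → M → M) (Λ : Set M) : Set M :=
  {x | Tendsto (fun t => infDist (φ t x) Λ) atBot (𝓝 0)}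

/-- `Λ` is invariant under the flow. -/
def IsInvariantSet (φ : ℝ → M → M) (Λ : Set M) : Prop := ∀ t : ℝ, φ t '' Λ = Λ

/-- `Γ` is a transitive set: compact, invariant, and equal to the ω-limit set of
one of its points. -/
def IsTransitiveSet (φ : ℝ → M → M) (Γ : Set M) : Prop :=
  IsCompact Γ ∧ IsInvariantSet φ Γ ∧ ∃ x ∈ Γ, OmegaSet φ x = Γ

/-- `Λ` is neutral: a compact invariant set which is the intersection of a Lyapunov
stable set for `φ` and a Lyapunov stable set for the reversed flow. -/
def IsNeutralSet (φ : ℝ → M → M) (Λ : Set M) : Prop :=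
  IsCompact Λ ∧ IsInvariantSet φ Λ ∧
    ∃ Λp Λm : Set M, LyapStable φ Λp ∧ LyapStable (ReverseFlow φ) Λm ∧ Λ = Λp ∩ Λm

/-- The nonwandering set of the flow. -/
def NonwanderingSet (φ : ℝ → M → M) : Set M :=
  {p | ∀ W : Set M, IsOpen W → p ∈ W → ∀ T : ℝ, 0 < T → ∃ t > T, (φ t '' W ∩ W).Nonempty}

/-- `Λ` is isolated: the maximal invariant set of some compact neighborhood. -/
def IsIsolatedSet (φ : ℝ → M → M) (Λ : Set M) : Prop :=
  ∃ U : Set M, IsCompact U ∧ Λ ⊆ interior U ∧ (⋂ t : ℝ, φ t '' U) = Λ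

/-- `Λ` is Ω-isolated: `Ω(φ) \ Λ` is closed. -/
def IsOmegaIsolatedSet (φ : ℝ → M → M) (Λ : Set M) : Prop :=
  IsClosed (NonwanderingSet φ \ Λ)



private lemma lemB (φ : ℝ → M → M) (hφ : IsFlow φ) {P Q : Set M}
    (hP : LyapStable φ P) (hQ : LyapStable (ReverseFlow φ) Q)
    {N : Set M} (hN : IsClosed N) (hPQ : P ∩ Q ⊆ interior N) :
    ∃ V : Set M, IsOpen V ∧ P ∩ Q ⊆ V ∧
      ∀ p : M, (∀ T : ℝ, ∃ t ≥ T, φ t p ∈ V) → OmegaSet φ p ⊆ N := by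
  classical
  set C : Set M := P \ interior N with hC
  set D : Set M := Q \ interior N with hD
  have hCcomp : IsCompact C := hP.1.diff isOpen_interior
  have hDcomp : IsCompact D := hQ.1.diff isOpen_interior
  have hdisj : Disjoint C D := by
    rw [Set.disjoint_left]
    rintro x ⟨hxP, hxN⟩ ⟨hxQ, _⟩
    exact hxN (hPQ ⟨hxP, hxQ⟩)
  obtain ⟨δ, hδ, hdisj2⟩ := hdisj.exists_thickenings hCcomp hDcomp.isClosed
  set A : Set M := interior N ∪ thickening (δ/2) C with hA
  set B : Set M := interior N ∪ thickening (δ/2) D with hB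
  have hAopen : IsOpen A := isOpen_interior.union isOpen_thickening
  have hBopen : IsOpen B := isOpen_interior.union isOpen_thickening
  have hPA : P ⊆ A := by
    intro x hx
    by_cases h : x ∈ interior N
    · exact Or.inl h
    · exact Or.inr (self_subset_thickening (half_pos hδ) C ⟨hx, h⟩)
  have hQB : Q ⊆ B := by
    intro x hx
    by_cases h : x ∈ interior N
    · exact Or.inl h
    · exact Or.inr (self_subset_thickening (half_pos hδ) D ⟨hx, h⟩)
  have hclAB : closure A ∩ closure B ⊆ N := by
    have hthC : closure (thickening (δ/2) C) ⊆ thickening δ C :=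
      (closure_minimal (thickening_subset_cthickening _ _) isClosed_cthickening).trans
        (cthickening_subset_thickening' hδ (half_lt_self hδ) C)
    have hthD : closure (thickening (δ/2) D) ⊆ thickening δ D :=
      (closure_minimal (thickening_subset_cthickening _ _) isClosed_cthickening).trans
        (cthickening_subset_thickening' hδ (half_lt_self hδ) D)
    have hclN : closure (interior N) ⊆ N := closure_minimal interior_subset hN
    rintro x ⟨hxA, hxB⟩
    rw [hA, closure_union] at hxA
    rw [hB, closure_union] at hxB
    rcases hxA with h1 | h1
    · exact hclN h1
    rcases hxB with h2 | h2
    · exact hclN h2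
    · exact absurd (Set.disjoint_left.mp hdisj2 (hthC h1)) (fun h => h (hthD h2))
  obtain ⟨Vp, hVpo, hPVp, hVp⟩ := hP.2 A hAopen hPA
  obtain ⟨Vm, hVmo, hQVm, hVm⟩ := hQ.2 B hBopen hQB
  refine ⟨Vp ∩ Vm, hVpo.inter hVmo, fun x hx => ⟨hPVp hx.1, hQVm hx.2⟩, ?_⟩
  intro p hp y hy
  obtain ⟨u, hu, huy⟩ := hy
  obtain ⟨t₀, ht₀, hpt₀⟩ := hp 0
  have horbB : ∀ s : ℝ, φ s p ∈ B := by
    intro s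
    obtain ⟨t, hts, hpt⟩ := hp s
    have heq : φ s p = ReverseFlow φ (t - s) (φ t p) := by
      show φ s p = φ (-(t - s)) (φ t p)
      rw [← hφ.2.2, neg_sub, sub_add_cancel]
    rw [heq]
    exact hVm (t - s) (by linarith) ⟨φ t p, hpt.2, rfl⟩
  have horbA : ∀ s : ℝ, t₀ ≤ s → φ s p ∈ A := by
    intro s hs
    have heq : φ s p = φ (s - t₀) (φ t₀ p) := by
      rw [← hφ.2.2, sub_add_cancel]
    rw [heq]
    exact hVp (s - t₀) (by linarith) ⟨φ t₀ p, hpt₀.1, rfl⟩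
  have hyB : y ∈ closure B :=
    mem_closure_of_tendsto huy (Eventually.of_forall fun n => horbB (u n))
  have hyA : y ∈ closure A :=
    mem_closure_of_tendsto huy ((hu.eventually (eventually_ge_atTop t₀)).mono
      fun n hn => horbA (u n) hn)
  exact hclAB ⟨hyA, hyB⟩

private lemma omega_returns (φ : ℝ → M → M) {y x : M} {V : Set M} (hV : IsOpen V)
    (hxV : x ∈ V) (hx : x ∈ OmegaSet φ y) : ∀ T : ℝ, ∃ t ≥ T, φ t y ∈ V := by
  obtain ⟨u, hu, huy⟩ := hx
  intro T
  have h1 : ∀ᶠ n in atTop, u n ≥ T := hu.eventually (eventually_ge_atTop T)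
  have h2 : ∀ᶠ n in atTop, φ (u n) y ∈ V := huy.eventually (hV.mem_nhds hxV)
  obtain ⟨n, hn1, hn2⟩ := (h1.and h2).exists
  exact ⟨u n, hn1, hn2⟩

private lemma lemC (φ : ℝ → M → M) (hφ : IsFlow φ) {Λ : Set M}
    (hiso : IsIsolatedSet φ Λ) (hneu : IsNeutralSet φ Λ) :
    ∃ V : Set M, IsOpen V ∧ Λ ⊆ V ∧
      ∀ Λ' : Set M, Λ'.Nonempty → IsTransitiveSet φ Λ' → IsNeutralSet φ Λ' →
        IsTransitiveSet φ Λ → (Λ' ∩ V).Nonempty → Λ' = Λ := by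
  obtain ⟨U₀, hU₀c, hΛint, hU₀iso⟩ := hiso
  obtain ⟨_, _, P, Q, hP, hQ, hPQ⟩ := hneu
  obtain ⟨V, hVo, hΛV, hVprop⟩ := lemB φ hφ hP hQ hU₀c.isClosed (hPQ ▸ hΛint)
  refine ⟨V, hVo, hPQ ▸ hΛV, ?_⟩
  rintro Λ' hne' ⟨hΛ'c, hΛ'inv, y, hyΛ', hωy⟩ hneu' htr ⟨x, hxΛ', hxV⟩
  have hΛ'U₀ : Λ' ⊆ U₀ :=
    hωy ▸ (hVprop y (omega_returns φ hVo hxV (hωy.symm ▸ hxΛ')))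
  have hΛ'Λ : Λ' ⊆ Λ := by
    rw [← hU₀iso]
    refine Set.subset_iInter fun t => ?_
    calc Λ' = φ t '' Λ' := (hΛ'inv t).symm
    _ ⊆ φ t '' U₀ := Set.image_mono hΛ'U₀
  obtain ⟨_, _, p, hpΛ, hωp⟩ := htr
  obtain ⟨hΛ'comp, _, P', Q', hP', hQ', hPQ'⟩ := hneu'
  obtain ⟨z, hzΛ'⟩ := hne'
  have hΛΛ' : Λ ⊆ Λ' := by
    intro w hwΛ
    have hle : ∀ ε : ℝ, 0 < ε → infDist w Λ' ≤ ε := by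
      intro ε hε
      have hNc : IsClosed {a | infDist a Λ' ≤ ε} :=
        isClosed_le (continuous_infDist_pt Λ') continuous_const
      have hopen : IsOpen {a | infDist a Λ' < ε} :=
        isOpen_lt (continuous_infDist_pt Λ') continuous_const
      have hsub0 : {a | infDist a Λ' < ε} ⊆ interior {a | infDist a Λ' ≤ ε} :=
        interior_maximal (fun b (hb : infDist b Λ' < ε) =>
          show infDist b Λ' ≤ ε from le_of_lt hb) hopen
      have hsub : P' ∩ Q' ⊆ interior {a | infDist a Λ' ≤ ε} := by
        rw [← hPQ']
        intro a ha
        exact hsub0 (show infDist a Λ' < ε by simpa [infDist_zero_of_mem ha] using hε)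
      obtain ⟨Vε, hVεo, hΛ'Vε, hVεprop⟩ := lemB φ hφ hP' hQ' hNc hsub
      have hzVε : z ∈ Vε := hΛ'Vε (hPQ' ▸ hzΛ')
      have hzω : z ∈ OmegaSet φ p := hωp.symm ▸ (hΛ'Λ hzΛ')
      exact hVεprop p (omega_returns φ hVεo hzVε hzω) (hωp.symm ▸ hwΛ)
    have hinf : infDist w Λ' = 0 := by
      by_contra h
      have hpos : 0 < infDist w Λ' := lt_of_le_of_ne infDist_nonneg (Ne.symm h)
      linarith [hle (infDist w Λ' / 2) (by linarith)]
    exact (hΛ'comp.isClosed.mem_iff_infDist_zero ⟨z, hzΛ'⟩).mpr hinf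
  exact le_antisymm hΛ'Λ hΛΛ'

theorem finite_iff_union_closed [CompactSpace M] (φ : ℝ → M → M) (hφ : IsFlow φ)
    (F' : Set (Set M))
    (hF : ∀ Λ ∈ F', Λ.Nonempty ∧ IsIsolatedSet φ Λ ∧ IsTransitiveSet φ Λ ∧
      IsNeutralSet φ Λ) :
    F'.Finite ↔ IsClosed (⋃₀ F') := by
  constructor
  · intro hfin
    have : ⋃₀ F' = ⋃ Λ ∈ F', Λ := Set.sUnion_eq_biUnion
    rw [this]
    exact hfin.isClosed_biUnion fun Λ hΛ => (hF Λ hΛ).2.2.1.1.isClosed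
  · intro hclosed
    classical
    have hScomp : IsCompact (⋃₀ F') := hclosed.isCompact
    -- choose V for each Λ ∈ F'
    choose! V hVo hΛV hVprop using
      fun Λ (hΛ : Λ ∈ F') => lemC φ hφ (hF Λ hΛ).2.1 (hF Λ hΛ).2.2.2
    have hcover : ⋃₀ F' ⊆ ⋃ Λ ∈ F', V Λ := by
      rintro x ⟨Λ, hΛ, hxΛ⟩
      exact Set.mem_biUnion hΛ (hΛV Λ hΛ hxΛ)
    obtain ⟨t, htF, htfin, htcover⟩ :=
      hScomp.elim_finite_subcover_image (fun Λ hΛ => hVo Λ hΛ) hcover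
    refine Set.Finite.subset htfin fun Λ' hΛ' => ?_
    obtain ⟨x, hxΛ'⟩ := (hF Λ' hΛ').1
    have hxS : x ∈ ⋃₀ F' := ⟨Λ', hΛ', hxΛ'⟩
    obtain ⟨Λ, hΛt, hxV⟩ := Set.mem_iUnion₂.mp (htcover hxS)
    have hΛF : Λ ∈ F' := htF hΛt
    have : Λ' = Λ := hVprop Λ hΛF Λ' (hF Λ' hΛ').1 (hF Λ' hΛ').2.2.1
      (hF Λ' hΛ').2.2.2 (hF Λ hΛF).2.2.1 ⟨x, hxΛ', hxV⟩
    exact this ▸ hΛt
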